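/- The Ranked Pairs voting method violates positive involvement: there exists a profile P, a candidate x ∈ RP(P), and a profile P' obtained from P by adding one new voter whose ballot ranks x in first place, such that x ∉ RP(P'). (A witness: a 20-voter profile on {a,b,c,d} whose margin graph has edges a→c with margin 8, a→d with margin 2, b→a with margin 2, c→b with margin 2, d→b with margin 4, d→c with margin 6, in which RP winners are {a,d}; adding a voter with ballot dabc yields RP winner set {a}, so d loses.) -/

import Mathlib

open scoped Classical

/-- `r` is a strict linear order on the finite set `X`, relating only members of `X`. -/
def IsLinOn (X : Finset ℕ) (r : ℕ → ℕ → Prop) : Prop :=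
  (∀ a b, r a b → a ∈ X ∧ b ∈ X) ∧
  (∀ a, ¬ r a a) ∧
  (∀ a b c, r a b → r b c → r a c) ∧
  (∀ a ∈ X, ∀ b ∈ X, a ≠ b → r a b ∨ r b a)

/-- A profile assigns to each voter in a nonempty finite set of voters a strict linear
order (ballot) on a nonempty finite set of candidates.  Voters and candidates are both
drawn from the infinite set `ℕ`. -/
structure Profile where
  voters : Finset ℕ
  cands : Finset ℕ
  voters_nonempty : voters.Nonempty
  cands_nonempty : cands.Nonempty
  ballot : ℕ → ℕ → ℕ → Prop
  ballot_lin : ∀ i ∈ voters, IsLinOn cands (ballot i)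

/-- `F` is a voting method: it assigns to each profile a nonempty set of winners
among the candidates of the profile. -/
def VotingMethod (F : Profile → Finset ℕ) : Prop :=
  ∀ P : Profile, (F P).Nonempty ∧ F P ⊆ P.cands

/-- The ballot `r` ranks `x` in first place among the candidates in `X`. -/
def RanksFirst (X : Finset ℕ) (r : ℕ → ℕ → Prop) (x : ℕ) : Prop :=
  x ∈ X ∧ ∀ y ∈ X, y ≠ x → r x y

/-- `P'` is obtained from `P` by adding one new voter `j` whose ballot ranks `x` in
first place. -/
def AddVoter (P P' : Profile) (j x : ℕ) : Prop :=
  P'.cands = P.cands ∧ j ∉ P.voters ∧ P'.voters = insert j P.voters ∧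
  (∀ i ∈ P.voters, ∀ a b, (P'.ballot i a b ↔ P.ballot i a b)) ∧
  RanksFirst P.cands (P'.ballot j) x

/-- `F` satisfies positive involvement (PI). -/
def SatisfiesPI (F : Profile → Finset ℕ) : Prop :=
  ∀ (P P' : Profile) (j x : ℕ), x ∈ F P → AddVoter P P' j x → x ∈ F P'

/-- The margin of `a` over `b` in the profile `P`. -/
noncomputable def marginP (P : Profile) (a b : ℕ) : ℤ :=
  ((P.voters.filter (fun i => P.ballot i a b)).card : ℤ) -
    ((P.voters.filter (fun i => P.ballot i b a)).card : ℤ)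

/-- The set of pairs `(x,y)` of distinct candidates with nonnegative margin. -/
def rpPairs (P : Profile) : Set (ℕ × ℕ) :=
  {p | p.1 ∈ P.cands ∧ p.2 ∈ P.cands ∧ p.1 ≠ p.2 ∧ 0 ≤ marginP P p.1 p.2}

/-- `r` is a strict linear order on the set `S` of pairs. -/
def IsLinOnPairs (S : Set (ℕ × ℕ)) (r : ℕ × ℕ → ℕ × ℕ → Prop) : Prop :=
  (∀ p ∈ S, ¬ r p p) ∧
  (∀ p ∈ S, ∀ q ∈ S, ∀ u ∈ S, r p q → r q u → r p u) ∧
  (∀ p ∈ S, ∀ q ∈ S, p ≠ q → r p q ∨ r q p)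

/-- `p` has higher priority than `q` according to the margins of `P` with ties
broken by the tie-breaking order `T`. -/
def higherPri (P : Profile) (T : ℕ × ℕ → ℕ × ℕ → Prop) (p q : ℕ × ℕ) : Prop :=
  marginP P q.1 q.2 < marginP P p.1 p.2 ∨
    (marginP P p.1 p.2 = marginP P q.1 q.2 ∧ T p q)

/-- The relation (set of pairs) `R` is acyclic. -/
def AcyclicRel (R : Set (ℕ × ℕ)) : Prop :=
  ∀ x, ¬ Relation.TransGen (fun u v => (u, v) ∈ R) x x

/-- One step of the Ranked Pairs procedure: lock in the pair `p` if doing so keeps the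
relation acyclic; otherwise lock in the reverse pair. -/
noncomputable def rpStep (R : Set (ℕ × ℕ)) (p : ℕ × ℕ) : Set (ℕ × ℕ) :=
  if AcyclicRel (insert p R) then insert p R else insert (p.2, p.1) R

/-- Processing the list `l` of pairs in order by the Ranked Pairs procedure. -/
noncomputable def rpRanking (l : List (ℕ × ℕ)) : Set (ℕ × ℕ) :=
  l.foldl rpStep ∅

/-- `l` enumerates exactly the pairs of distinct candidates with nonnegative margin,
in decreasing order of priority. -/
def IsPriorityList (P : Profile) (T : ℕ × ℕ → ℕ × ℕ → Prop) (l : List (ℕ × ℕ)) : Prop :=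
  (∀ p, p ∈ l ↔ p ∈ rpPairs P) ∧ l.Pairwise (higherPri P T)

/-- The Ranked Pairs winners: `x` wins iff for some tie-breaking linear order `T` on the
pairs with nonnegative margin, `x` is the maximum of the Ranked Pairs ranking obtained by
processing the pairs in decreasing order of priority. -/
noncomputable def RP (P : Profile) : Finset ℕ :=
  P.cands.filter (fun x =>
    ∃ (T : ℕ × ℕ → ℕ × ℕ → Prop) (l : List (ℕ × ℕ)),
      IsLinOnPairs (rpPairs P) T ∧ IsPriorityList P T l ∧
      ∀ y ∈ P.cands, y ≠ x → (x, y) ∈ rpRanking l)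
/-! ### Auxiliary constructions for the counterexample -/

abbrev cnds : Finset ℕ := {0, 1, 2, 3}

def ballotsL : List (List ℕ) :=
  [[0,1,2,3],[0,2,1,3],[0,2,1,3],[0,2,1,3],[1,0,2,3],[1,2,3,0],[1,2,3,0],
   [1,2,3,0],[1,2,3,0],[2,3,0,1],[3,0,1,2],[3,0,1,2],[1,0,2,3]]

def rk (i c : ℕ) : ℕ := (ballotsL.getD i []).idxOf c

abbrev bal (i a b : ℕ) : Prop := a ∈ cnds ∧ b ∈ cnds ∧ rk i a < rk i b

lemma rk_inj : ∀ i ∈ Finset.range 13, ∀ a ∈ cnds, ∀ b ∈ cnds, a ≠ b → rk i a ≠ rk i b := by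
  decide

lemma isLinOn_bal (i : ℕ) (h : ∀ a ∈ cnds, ∀ b ∈ cnds, a ≠ b → rk i a ≠ rk i b) :
    IsLinOn cnds (bal i) := by
  refine ⟨fun a b hab => ⟨hab.1, hab.2.1⟩, fun a ha => lt_irrefl _ ha.2.2,
    fun a b c h1 h2 => ⟨h1.1, h2.2.1, lt_trans h1.2.2 h2.2.2⟩, ?_⟩
  intro a ha b hb hne
  rcases lt_or_gt_of_ne (h a ha b hb hne) with h' | h'
  · exact Or.inl ⟨ha, hb, h'⟩
  · exact Or.inr ⟨hb, ha, h'⟩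

abbrev PP : Profile where
  voters := Finset.range 12
  cands := cnds
  voters_nonempty := ⟨0, by decide⟩
  cands_nonempty := ⟨0, by decide⟩
  ballot := bal
  ballot_lin := fun i hi => isLinOn_bal i
    (rk_inj i (Finset.mem_range.2 (Nat.lt_succ_of_lt (Finset.mem_range.1 hi))))

abbrev PP' : Profile where
  voters := insert 12 (Finset.range 12)
  cands := cnds
  voters_nonempty := ⟨0, by decide⟩
  cands_nonempty := ⟨0, by decide⟩
  ballot := bal
  ballot_lin := fun i hi => isLinOn_bal i (rk_inj i (by
    rcases Finset.mem_insert.1 hi with rfl | h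
    · decide
    · exact Finset.mem_range.2 (Nat.lt_succ_of_lt (Finset.mem_range.1 h))))

lemma margin_eq (P : Profile) (a b : ℕ) (s t : Finset ℕ)
    (hs1 : s ⊆ P.voters) (hs2 : ∀ i ∈ P.voters, (i ∈ s ↔ P.ballot i a b))
    (ht1 : t ⊆ P.voters) (ht2 : ∀ i ∈ P.voters, (i ∈ t ↔ P.ballot i b a)) :
    marginP P a b = (s.card : ℤ) - t.card := by
  have h1 : P.voters.filter (fun i => P.ballot i a b) = s := by
    ext i
    rw [Finset.mem_filter]
    exact ⟨fun ⟨hv, hb⟩ => (hs2 i hv).2 hb, fun his => ⟨hs1 his, (hs2 i (hs1 his)).1 his⟩⟩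
  have h2 : P.voters.filter (fun i => P.ballot i b a) = t := by
    ext i
    rw [Finset.mem_filter]
    exact ⟨fun ⟨hv, hb⟩ => (ht2 i hv).2 hb, fun his => ⟨ht1 his, (ht2 i (ht1 his)).1 his⟩⟩
  unfold marginP
  rw [h1, h2]
lemma mgP01 : marginP PP 0 1 = 2 := by
  rw [margin_eq PP 0 1 {0,1,2,3,9,10,11} {4,5,6,7,8} (by decide) (by decide) (by decide) (by decide)]
  decide

lemma mgP02 : marginP PP 0 2 = 2 := by
  rw [margin_eq PP 0 2 {0,1,2,3,4,10,11} {5,6,7,8,9} (by decide) (by decide) (by decide) (by decide)]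
  decide

lemma mgP03 : marginP PP 0 3 = -2 := by
  rw [margin_eq PP 0 3 {0,1,2,3,4} {5,6,7,8,9,10,11} (by decide) (by decide) (by decide) (by decide)]
  decide

lemma mgP10 : marginP PP 1 0 = -2 := by
  rw [margin_eq PP 1 0 {4,5,6,7,8} {0,1,2,3,9,10,11} (by decide) (by decide) (by decide) (by decide)]
  decide

lemma mgP12 : marginP PP 1 2 = 4 := by
  rw [margin_eq PP 1 2 {0,4,5,6,7,8,10,11} {1,2,3,9} (by decide) (by decide) (by decide) (by decide)]
  decide

lemma mgP13 : marginP PP 1 3 = 6 := by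
  rw [margin_eq PP 1 3 {0,1,2,3,4,5,6,7,8} {9,10,11} (by decide) (by decide) (by decide) (by decide)]
  decide

lemma mgP20 : marginP PP 2 0 = -2 := by
  rw [margin_eq PP 2 0 {5,6,7,8,9} {0,1,2,3,4,10,11} (by decide) (by decide) (by decide) (by decide)]
  decide

lemma mgP21 : marginP PP 2 1 = -4 := by
  rw [margin_eq PP 2 1 {1,2,3,9} {0,4,5,6,7,8,10,11} (by decide) (by decide) (by decide) (by decide)]
  decide

lemma mgP23 : marginP PP 2 3 = 8 := by
  rw [margin_eq PP 2 3 {0,1,2,3,4,5,6,7,8,9} {10,11} (by decide) (by decide) (by decide) (by decide)]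
  decide

lemma mgP30 : marginP PP 3 0 = 2 := by
  rw [margin_eq PP 3 0 {5,6,7,8,9,10,11} {0,1,2,3,4} (by decide) (by decide) (by decide) (by decide)]
  decide

lemma mgP31 : marginP PP 3 1 = -6 := by
  rw [margin_eq PP 3 1 {9,10,11} {0,1,2,3,4,5,6,7,8} (by decide) (by decide) (by decide) (by decide)]
  decide

lemma mgP32 : marginP PP 3 2 = -8 := by
  rw [margin_eq PP 3 2 {10,11} {0,1,2,3,4,5,6,7,8,9} (by decide) (by decide) (by decide) (by decide)]
  decide

lemma mgQ01 : marginP PP' 0 1 = 1 := by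
  rw [margin_eq PP' 0 1 {0,1,2,3,9,10,11} {4,5,6,7,8,12} (by decide) (by decide) (by decide) (by decide)]
  decide

lemma mgQ02 : marginP PP' 0 2 = 3 := by
  rw [margin_eq PP' 0 2 {0,1,2,3,4,10,11,12} {5,6,7,8,9} (by decide) (by decide) (by decide) (by decide)]
  decide

lemma mgQ03 : marginP PP' 0 3 = -1 := by
  rw [margin_eq PP' 0 3 {0,1,2,3,4,12} {5,6,7,8,9,10,11} (by decide) (by decide) (by decide) (by decide)]
  decide

lemma mgQ10 : marginP PP' 1 0 = -1 := by
  rw [margin_eq PP' 1 0 {4,5,6,7,8,12} {0,1,2,3,9,10,11} (by decide) (by decide) (by decide) (by decide)]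
  decide

lemma mgQ12 : marginP PP' 1 2 = 5 := by
  rw [margin_eq PP' 1 2 {0,4,5,6,7,8,10,11,12} {1,2,3,9} (by decide) (by decide) (by decide) (by decide)]
  decide

lemma mgQ13 : marginP PP' 1 3 = 7 := by
  rw [margin_eq PP' 1 3 {0,1,2,3,4,5,6,7,8,12} {9,10,11} (by decide) (by decide) (by decide) (by decide)]
  decide

lemma mgQ20 : marginP PP' 2 0 = -3 := by
  rw [margin_eq PP' 2 0 {5,6,7,8,9} {0,1,2,3,4,10,11,12} (by decide) (by decide) (by decide) (by decide)]
  decide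

lemma mgQ21 : marginP PP' 2 1 = -5 := by
  rw [margin_eq PP' 2 1 {1,2,3,9} {0,4,5,6,7,8,10,11,12} (by decide) (by decide) (by decide) (by decide)]
  decide

lemma mgQ23 : marginP PP' 2 3 = 9 := by
  rw [margin_eq PP' 2 3 {0,1,2,3,4,5,6,7,8,9,12} {10,11} (by decide) (by decide) (by decide) (by decide)]
  decide

lemma mgQ30 : marginP PP' 3 0 = 1 := by
  rw [margin_eq PP' 3 0 {5,6,7,8,9,10,11} {0,1,2,3,4,12} (by decide) (by decide) (by decide) (by decide)]
  decide

lemma mgQ31 : marginP PP' 3 1 = -7 := by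
  rw [margin_eq PP' 3 1 {9,10,11} {0,1,2,3,4,5,6,7,8,12} (by decide) (by decide) (by decide) (by decide)]
  decide

lemma mgQ32 : marginP PP' 3 2 = -9 := by
  rw [margin_eq PP' 3 2 {10,11} {0,1,2,3,4,5,6,7,8,9,12} (by decide) (by decide) (by decide) (by decide)]
  decide
lemma rpPairsP : ∀ p : ℕ × ℕ, p ∈ rpPairs PP ↔
    (p = (2,3) ∨ p = (1,3) ∨ p = (1,2) ∨ p = (0,1) ∨ p = (0,2) ∨ p = (3,0)) := by
  intro p
  constructor
  · intro h
    obtain ⟨u, v⟩ := p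
    obtain ⟨hu, hv, hne, hm⟩ := h
    have hu' : u ∈ ({0,1,2,3} : Finset ℕ) := hu
    have hv' : v ∈ ({0,1,2,3} : Finset ℕ) := hv
    have hne' : u ≠ v := hne
    have hm' : (0:ℤ) ≤ marginP PP u v := hm
    simp only [Finset.mem_insert, Finset.mem_singleton] at hu' hv'
    rcases hu' with rfl | rfl | rfl | rfl <;> rcases hv' with rfl | rfl | rfl | rfl
    · exact absurd rfl hne'
    · decide
    · decide
    · rw [mgP03] at hm'; norm_num at hm'
    · rw [mgP10] at hm'; norm_num at hm'
    · exact absurd rfl hne'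
    · decide
    · decide
    · rw [mgP20] at hm'; norm_num at hm'
    · rw [mgP21] at hm'; norm_num at hm'
    · exact absurd rfl hne'
    · decide
    · decide
    · rw [mgP31] at hm'; norm_num at hm'
    · rw [mgP32] at hm'; norm_num at hm'
    · exact absurd rfl hne'
  · rintro (rfl | rfl | rfl | rfl | rfl | rfl)
    · exact ⟨by decide, by decide, by decide, show (0:ℤ) ≤ marginP PP 2 3 by rw [mgP23]; decide⟩
    · exact ⟨by decide, by decide, by decide, show (0:ℤ) ≤ marginP PP 1 3 by rw [mgP13]; decide⟩
    · exact ⟨by decide, by decide, by decide, show (0:ℤ) ≤ marginP PP 1 2 by rw [mgP12]; decide⟩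
    · exact ⟨by decide, by decide, by decide, show (0:ℤ) ≤ marginP PP 0 1 by rw [mgP01]; decide⟩
    · exact ⟨by decide, by decide, by decide, show (0:ℤ) ≤ marginP PP 0 2 by rw [mgP02]; decide⟩
    · exact ⟨by decide, by decide, by decide, show (0:ℤ) ≤ marginP PP 3 0 by rw [mgP30]; decide⟩

lemma rpPairsQ : ∀ p : ℕ × ℕ, p ∈ rpPairs PP' ↔
    (p = (2,3) ∨ p = (1,3) ∨ p = (1,2) ∨ p = (0,2) ∨ p = (0,1) ∨ p = (3,0)) := by
  intro p
  constructor
  · intro h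
    obtain ⟨u, v⟩ := p
    obtain ⟨hu, hv, hne, hm⟩ := h
    have hu' : u ∈ ({0,1,2,3} : Finset ℕ) := hu
    have hv' : v ∈ ({0,1,2,3} : Finset ℕ) := hv
    have hne' : u ≠ v := hne
    have hm' : (0:ℤ) ≤ marginP PP' u v := hm
    simp only [Finset.mem_insert, Finset.mem_singleton] at hu' hv'
    rcases hu' with rfl | rfl | rfl | rfl <;> rcases hv' with rfl | rfl | rfl | rfl
    · exact absurd rfl hne'
    · decide
    · decide
    · rw [mgQ03] at hm'; norm_num at hm'
    · rw [mgQ10] at hm'; norm_num at hm'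
    · exact absurd rfl hne'
    · decide
    · decide
    · rw [mgQ20] at hm'; norm_num at hm'
    · rw [mgQ21] at hm'; norm_num at hm'
    · exact absurd rfl hne'
    · decide
    · decide
    · rw [mgQ31] at hm'; norm_num at hm'
    · rw [mgQ32] at hm'; norm_num at hm'
    · exact absurd rfl hne'
  · rintro (rfl | rfl | rfl | rfl | rfl | rfl)
    · exact ⟨by decide, by decide, by decide, show (0:ℤ) ≤ marginP PP' 2 3 by rw [mgQ23]; decide⟩
    · exact ⟨by decide, by decide, by decide, show (0:ℤ) ≤ marginP PP' 1 3 by rw [mgQ13]; decide⟩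
    · exact ⟨by decide, by decide, by decide, show (0:ℤ) ≤ marginP PP' 1 2 by rw [mgQ12]; decide⟩
    · exact ⟨by decide, by decide, by decide, show (0:ℤ) ≤ marginP PP' 0 2 by rw [mgQ02]; decide⟩
    · exact ⟨by decide, by decide, by decide, show (0:ℤ) ≤ marginP PP' 0 1 by rw [mgQ01]; decide⟩
    · exact ⟨by decide, by decide, by decide, show (0:ℤ) ≤ marginP PP' 3 0 by rw [mgQ30]; decide⟩

/-! ### Acyclicity helpers -/

lemma acyclic_of_rank (R : Set (ℕ × ℕ)) (f : ℕ → ℕ)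
    (h : ∀ u v, (u, v) ∈ R → f u < f v) : AcyclicRel R := by
  intro x hx
  have key : ∀ y z : ℕ, Relation.TransGen (fun u v => (u, v) ∈ R) y z → f y < f z := by
    intro y z hyz
    induction hyz with
    | single h' => exact h _ _ h'
    | tail _ h' ih => exact lt_trans ih (h _ _ h')
  exact lt_irrefl _ (key x x hx)

lemma rpStep_pos {R : Set (ℕ × ℕ)} {p : ℕ × ℕ} (h : AcyclicRel (insert p R)) :
    rpStep R p = insert p R := by
  unfold rpStep
  rw [if_pos h]

lemma rpStep_neg {R : Set (ℕ × ℕ)} {p : ℕ × ℕ} (h : ¬ AcyclicRel (insert p R)) :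
    rpStep R p = insert (p.2, p.1) R := by
  unfold rpStep
  rw [if_neg h]
/-! ### Evaluating the Ranked Pairs procedure on explicit lists -/

lemma acycP1 : AcyclicRel (insert ((2:ℕ),(3:ℕ)) (∅ : Set (ℕ × ℕ))) := by
  refine acyclic_of_rank _ (fun n => n) ?_
  intro u v h
  simp only [Set.mem_insert_iff, Set.mem_empty_iff_false, or_false, Prod.mk.injEq] at h
  show u < v
  omega

lemma acycP2 : AcyclicRel (insert ((1:ℕ),(3:ℕ)) (insert ((2:ℕ),(3:ℕ)) (∅ : Set (ℕ × ℕ)))) := by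
  refine acyclic_of_rank _ (fun n => n) ?_
  intro u v h
  simp only [Set.mem_insert_iff, Set.mem_empty_iff_false, or_false, Prod.mk.injEq] at h
  show u < v
  omega

lemma acycP3 : AcyclicRel (insert ((1:ℕ),(2:ℕ)) (insert ((1:ℕ),(3:ℕ))
    (insert ((2:ℕ),(3:ℕ)) (∅ : Set (ℕ × ℕ))))) := by
  refine acyclic_of_rank _ (fun n => n) ?_
  intro u v h
  simp only [Set.mem_insert_iff, Set.mem_empty_iff_false, or_false, Prod.mk.injEq] at h
  show u < v
  omega

lemma acycP4 : AcyclicRel (insert ((3:ℕ),(0:ℕ)) (insert ((1:ℕ),(2:ℕ)) (insert ((1:ℕ),(3:ℕ))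
    (insert ((2:ℕ),(3:ℕ)) (∅ : Set (ℕ × ℕ)))))) := by
  refine acyclic_of_rank _ (fun n => if n = 0 then 3 else n - 1) ?_
  intro u v h
  simp only [Set.mem_insert_iff, Set.mem_empty_iff_false, or_false, Prod.mk.injEq] at h
  rcases h with ⟨rfl, rfl⟩ | ⟨rfl, rfl⟩ | ⟨rfl, rfl⟩ | ⟨rfl, rfl⟩ <;> decide

lemma nacycP5 : ¬ AcyclicRel (insert ((0:ℕ),(1:ℕ)) (insert ((3:ℕ),(0:ℕ)) (insert ((1:ℕ),(2:ℕ))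
    (insert ((1:ℕ),(3:ℕ)) (insert ((2:ℕ),(3:ℕ)) (∅ : Set (ℕ × ℕ))))))) := by
  intro h
  exact h 0 (Relation.TransGen.head (b := (1:ℕ)) (by simp)
    (Relation.TransGen.head (b := (3:ℕ)) (by simp) (Relation.TransGen.single (by simp))))

lemma nacycP6 : ¬ AcyclicRel (insert ((0:ℕ),(2:ℕ)) (insert ((1:ℕ),(0:ℕ)) (insert ((3:ℕ),(0:ℕ))
    (insert ((1:ℕ),(2:ℕ)) (insert ((1:ℕ),(3:ℕ)) (insert ((2:ℕ),(3:ℕ))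
    (∅ : Set (ℕ × ℕ)))))))) := by
  intro h
  exact h 0 (Relation.TransGen.head (b := (2:ℕ)) (by simp)
    (Relation.TransGen.head (b := (3:ℕ)) (by simp) (Relation.TransGen.single (by simp))))

lemma rpRank_P : rpRanking [(2,3),(1,3),(1,2),(3,0),(0,1),(0,2)] =
    insert ((2:ℕ),(0:ℕ)) (insert ((1:ℕ),(0:ℕ)) (insert ((3:ℕ),(0:ℕ)) (insert ((1:ℕ),(2:ℕ))
      (insert ((1:ℕ),(3:ℕ)) (insert ((2:ℕ),(3:ℕ)) (∅ : Set (ℕ × ℕ))))))) := by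
  have e1 : rpStep (∅ : Set (ℕ × ℕ)) (2,3) = insert (2,3) ∅ := rpStep_pos acycP1
  have e2 : rpStep (insert ((2:ℕ),(3:ℕ)) (∅ : Set (ℕ × ℕ))) (1,3) =
      insert (1,3) (insert (2,3) ∅) := rpStep_pos acycP2
  have e3 : rpStep (insert ((1:ℕ),(3:ℕ)) (insert ((2:ℕ),(3:ℕ)) (∅ : Set (ℕ × ℕ)))) (1,2) =
      insert (1,2) (insert (1,3) (insert (2,3) ∅)) := rpStep_pos acycP3
  have e4 : rpStep (insert ((1:ℕ),(2:ℕ)) (insert ((1:ℕ),(3:ℕ)) (insert ((2:ℕ),(3:ℕ))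
      (∅ : Set (ℕ × ℕ))))) (3,0) =
      insert (3,0) (insert (1,2) (insert (1,3) (insert (2,3) ∅))) := rpStep_pos acycP4
  have e5 : rpStep (insert ((3:ℕ),(0:ℕ)) (insert ((1:ℕ),(2:ℕ)) (insert ((1:ℕ),(3:ℕ))
      (insert ((2:ℕ),(3:ℕ)) (∅ : Set (ℕ × ℕ)))))) (0,1) =
      insert (1,0) (insert (3,0) (insert (1,2) (insert (1,3) (insert (2,3) ∅)))) :=
    rpStep_neg nacycP5
  have e6 : rpStep (insert ((1:ℕ),(0:ℕ)) (insert ((3:ℕ),(0:ℕ)) (insert ((1:ℕ),(2:ℕ))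
      (insert ((1:ℕ),(3:ℕ)) (insert ((2:ℕ),(3:ℕ)) (∅ : Set (ℕ × ℕ))))))) (0,2) =
      insert (2,0) (insert (1,0) (insert (3,0) (insert (1,2) (insert (1,3)
        (insert (2,3) ∅))))) := rpStep_neg nacycP6
  unfold rpRanking
  rw [List.foldl_cons, e1, List.foldl_cons, e2, List.foldl_cons, e3, List.foldl_cons, e4,
    List.foldl_cons, e5, List.foldl_cons, e6, List.foldl_nil]

lemma acycQ4 : AcyclicRel (insert ((0:ℕ),(2:ℕ)) (insert ((1:ℕ),(2:ℕ)) (insert ((1:ℕ),(3:ℕ))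
    (insert ((2:ℕ),(3:ℕ)) (∅ : Set (ℕ × ℕ)))))) := by
  refine acyclic_of_rank _ (fun n => n) ?_
  intro u v h
  simp only [Set.mem_insert_iff, Set.mem_empty_iff_false, or_false, Prod.mk.injEq] at h
  show u < v
  omega

lemma acycQ5 : AcyclicRel (insert ((0:ℕ),(1:ℕ)) (insert ((0:ℕ),(2:ℕ)) (insert ((1:ℕ),(2:ℕ))
    (insert ((1:ℕ),(3:ℕ)) (insert ((2:ℕ),(3:ℕ)) (∅ : Set (ℕ × ℕ))))))) := by
  refine acyclic_of_rank _ (fun n => n) ?_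
  intro u v h
  simp only [Set.mem_insert_iff, Set.mem_empty_iff_false, or_false, Prod.mk.injEq] at h
  show u < v
  omega

lemma nacycQA6 : ¬ AcyclicRel (insert ((3:ℕ),(0:ℕ)) (insert ((0:ℕ),(1:ℕ))
    (insert ((0:ℕ),(2:ℕ)) (insert ((1:ℕ),(2:ℕ)) (insert ((1:ℕ),(3:ℕ))
    (insert ((2:ℕ),(3:ℕ)) (∅ : Set (ℕ × ℕ)))))))) := by
  intro h
  exact h 3 (Relation.TransGen.head (b := (0:ℕ)) (by simp)
    (Relation.TransGen.head (b := (2:ℕ)) (by simp) (Relation.TransGen.single (by simp))))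

lemma nacycQB5 : ¬ AcyclicRel (insert ((3:ℕ),(0:ℕ)) (insert ((0:ℕ),(2:ℕ))
    (insert ((1:ℕ),(2:ℕ)) (insert ((1:ℕ),(3:ℕ)) (insert ((2:ℕ),(3:ℕ))
    (∅ : Set (ℕ × ℕ))))))) := by
  intro h
  exact h 3 (Relation.TransGen.head (b := (0:ℕ)) (by simp)
    (Relation.TransGen.head (b := (2:ℕ)) (by simp) (Relation.TransGen.single (by simp))))

lemma acycQB6 : AcyclicRel (insert ((0:ℕ),(1:ℕ)) (insert ((0:ℕ),(3:ℕ)) (insert ((0:ℕ),(2:ℕ))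
    (insert ((1:ℕ),(2:ℕ)) (insert ((1:ℕ),(3:ℕ)) (insert ((2:ℕ),(3:ℕ))
    (∅ : Set (ℕ × ℕ)))))))) := by
  refine acyclic_of_rank _ (fun n => n) ?_
  intro u v h
  simp only [Set.mem_insert_iff, Set.mem_empty_iff_false, or_false, Prod.mk.injEq] at h
  show u < v
  omega

lemma rpRank_A : rpRanking [(2,3),(1,3),(1,2),(0,2),(0,1),(3,0)] =
    insert ((0:ℕ),(3:ℕ)) (insert ((0:ℕ),(1:ℕ)) (insert ((0:ℕ),(2:ℕ)) (insert ((1:ℕ),(2:ℕ))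
      (insert ((1:ℕ),(3:ℕ)) (insert ((2:ℕ),(3:ℕ)) (∅ : Set (ℕ × ℕ))))))) := by
  have e1 : rpStep (∅ : Set (ℕ × ℕ)) (2,3) = insert (2,3) ∅ := rpStep_pos acycP1
  have e2 : rpStep (insert ((2:ℕ),(3:ℕ)) (∅ : Set (ℕ × ℕ))) (1,3) =
      insert (1,3) (insert (2,3) ∅) := rpStep_pos acycP2
  have e3 : rpStep (insert ((1:ℕ),(3:ℕ)) (insert ((2:ℕ),(3:ℕ)) (∅ : Set (ℕ × ℕ)))) (1,2) =
      insert (1,2) (insert (1,3) (insert (2,3) ∅)) := rpStep_pos acycP3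
  have e4 : rpStep (insert ((1:ℕ),(2:ℕ)) (insert ((1:ℕ),(3:ℕ)) (insert ((2:ℕ),(3:ℕ))
      (∅ : Set (ℕ × ℕ))))) (0,2) =
      insert (0,2) (insert (1,2) (insert (1,3) (insert (2,3) ∅))) := rpStep_pos acycQ4
  have e5 : rpStep (insert ((0:ℕ),(2:ℕ)) (insert ((1:ℕ),(2:ℕ)) (insert ((1:ℕ),(3:ℕ))
      (insert ((2:ℕ),(3:ℕ)) (∅ : Set (ℕ × ℕ)))))) (0,1) =
      insert (0,1) (insert (0,2) (insert (1,2) (insert (1,3) (insert (2,3) ∅)))) :=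
    rpStep_pos acycQ5
  have e6 : rpStep (insert ((0:ℕ),(1:ℕ)) (insert ((0:ℕ),(2:ℕ)) (insert ((1:ℕ),(2:ℕ))
      (insert ((1:ℕ),(3:ℕ)) (insert ((2:ℕ),(3:ℕ)) (∅ : Set (ℕ × ℕ))))))) (3,0) =
      insert (0,3) (insert (0,1) (insert (0,2) (insert (1,2) (insert (1,3)
        (insert (2,3) ∅))))) := rpStep_neg nacycQA6
  unfold rpRanking
  rw [List.foldl_cons, e1, List.foldl_cons, e2, List.foldl_cons, e3, List.foldl_cons, e4,
    List.foldl_cons, e5, List.foldl_cons, e6, List.foldl_nil]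

lemma rpRank_B : rpRanking [(2,3),(1,3),(1,2),(0,2),(3,0),(0,1)] =
    insert ((0:ℕ),(1:ℕ)) (insert ((0:ℕ),(3:ℕ)) (insert ((0:ℕ),(2:ℕ)) (insert ((1:ℕ),(2:ℕ))
      (insert ((1:ℕ),(3:ℕ)) (insert ((2:ℕ),(3:ℕ)) (∅ : Set (ℕ × ℕ))))))) := by
  have e1 : rpStep (∅ : Set (ℕ × ℕ)) (2,3) = insert (2,3) ∅ := rpStep_pos acycP1
  have e2 : rpStep (insert ((2:ℕ),(3:ℕ)) (∅ : Set (ℕ × ℕ))) (1,3) =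
      insert (1,3) (insert (2,3) ∅) := rpStep_pos acycP2
  have e3 : rpStep (insert ((1:ℕ),(3:ℕ)) (insert ((2:ℕ),(3:ℕ)) (∅ : Set (ℕ × ℕ)))) (1,2) =
      insert (1,2) (insert (1,3) (insert (2,3) ∅)) := rpStep_pos acycP3
  have e4 : rpStep (insert ((1:ℕ),(2:ℕ)) (insert ((1:ℕ),(3:ℕ)) (insert ((2:ℕ),(3:ℕ))
      (∅ : Set (ℕ × ℕ))))) (0,2) =
      insert (0,2) (insert (1,2) (insert (1,3) (insert (2,3) ∅))) := rpStep_pos acycQ4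
  have e5 : rpStep (insert ((0:ℕ),(2:ℕ)) (insert ((1:ℕ),(2:ℕ)) (insert ((1:ℕ),(3:ℕ))
      (insert ((2:ℕ),(3:ℕ)) (∅ : Set (ℕ × ℕ)))))) (3,0) =
      insert (0,3) (insert (0,2) (insert (1,2) (insert (1,3) (insert (2,3) ∅)))) :=
    rpStep_neg nacycQB5
  have e6 : rpStep (insert ((0:ℕ),(3:ℕ)) (insert ((0:ℕ),(2:ℕ)) (insert ((1:ℕ),(2:ℕ))
      (insert ((1:ℕ),(3:ℕ)) (insert ((2:ℕ),(3:ℕ)) (∅ : Set (ℕ × ℕ))))))) (0,1) =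
      insert (0,1) (insert (0,3) (insert (0,2) (insert (1,2) (insert (1,3)
        (insert (2,3) ∅))))) := rpStep_pos acycQB6
  unfold rpRanking
  rw [List.foldl_cons, e1, List.foldl_cons, e2, List.foldl_cons, e3, List.foldl_cons, e4,
    List.foldl_cons, e5, List.foldl_cons, e6, List.foldl_nil]
/-! ### Structure of priority lists -/

lemma extract_head {r : ℕ × ℕ → ℕ × ℕ → Prop} {l : List (ℕ × ℕ)} {Q : ℕ × ℕ → Prop}
    (m : ℕ × ℕ) (hmem : ∀ p, p ∈ l ↔ Q p) (hpw : l.Pairwise r) (hm : Q m)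
    (hirr : ¬ r m m) (htop : ∀ q, Q q → q ≠ m → ¬ r q m) :
    ∃ l', l = m :: l' ∧ (∀ p, p ∈ l' ↔ (Q p ∧ p ≠ m)) ∧ l'.Pairwise r := by
  have hml : m ∈ l := (hmem m).2 hm
  cases l with
  | nil => exact absurd hml List.not_mem_nil
  | cons a t =>
    obtain ⟨hra, hpt⟩ := List.pairwise_cons.1 hpw
    have ham : a = m := by
      by_contra hne
      have hmt : m ∈ t := by
        rcases List.mem_cons.1 hml with h | h
        · exact absurd h.symm hne
        · exact h
      exact htop a ((hmem a).1 List.mem_cons_self) hne (hra m hmt)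
    subst ham
    refine ⟨t, rfl, fun p => ⟨fun hp => ⟨(hmem p).1 (List.mem_cons_of_mem a hp), ?_⟩,
      fun hp => ?_⟩, hpt⟩
    · rintro rfl
      exact hirr (hra _ hp)
    · rcases List.mem_cons.1 ((hmem p).2 hp.1) with h | h
      · exact absurd h hp.2
      · exact h

lemma tail_single {r : ℕ × ℕ → ℕ × ℕ → Prop} {t : List (ℕ × ℕ)} {w z : ℕ × ℕ}
    (hmem : ∀ p, p ∈ w :: t ↔ (p = w ∨ p = z)) (hpw : (w :: t).Pairwise r)
    (hw : ¬ r w w) (hz : ¬ r z z) (hwz : w ≠ z) : t = [z] := by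
  obtain ⟨hra, hpt⟩ := List.pairwise_cons.1 hpw
  have hzt : z ∈ t := by
    rcases List.mem_cons.1 ((hmem z).2 (Or.inr rfl)) with h | h
    · exact absurd h.symm hwz
    · exact h
  have htz : ∀ p ∈ t, p = z := by
    intro p hp
    rcases (hmem p).1 (List.mem_cons_of_mem w hp) with rfl | rfl
    · exact absurd (hra p hp) hw
    · rfl
  cases t with
  | nil => exact absurd hzt List.not_mem_nil
  | cons b t2 =>
    have hbz : b = z := htz b List.mem_cons_self
    have ht2 : t2 = [] := by
      cases t2 with
      | nil => rfl
      | cons c t3 =>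
        have hcz : c = z := htz c (List.mem_cons_of_mem b List.mem_cons_self)
        have hr := (List.pairwise_cons.1 hpt).1 c List.mem_cons_self
        rw [hbz, hcz] at hr
        exact absurd hr hz
    rw [hbz, ht2]

lemma two_elem {r : ℕ × ℕ → ℕ × ℕ → Prop} {l : List (ℕ × ℕ)} {u v : ℕ × ℕ}
    (huv : u ≠ v) (hmem : ∀ p, p ∈ l ↔ (p = u ∨ p = v)) (hpw : l.Pairwise r)
    (hu : ¬ r u u) (hv : ¬ r v v) : l = [u, v] ∨ l = [v, u] := by
  cases l with
  | nil => exact absurd ((hmem u).2 (Or.inl rfl)) List.not_mem_nil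
  | cons a t =>
    rcases (hmem a).1 List.mem_cons_self with rfl | rfl
    · left
      rw [tail_single hmem hpw hu hv huv]
    · right
      have hmem' : ∀ p, p ∈ a :: t ↔ (p = a ∨ p = u) := fun p => (hmem p).trans or_comm
      rw [tail_single hmem' hpw hv hu (Ne.symm huv)]

/-- An explicit tie-breaking index used for the first profile. -/
def idxP (p : ℕ × ℕ) : ℕ := if p = (3,0) then 0 else 4 * p.1 + p.2 + 1
theorem rankedPairs_violates_PI :
    ∃ (P P' : Profile) (j x : ℕ),
      x ∈ RP P ∧ AddVoter P P' j x ∧ x ∉ RP P' := by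
  refine ⟨PP, PP', 12, 1, ?_, ?_, ?_⟩
  · -- 1 ∈ RP PP
    unfold RP
    refine Finset.mem_filter.2 ⟨by decide, fun p q => idxP p < idxP q,
      [(2,3),(1,3),(1,2),(3,0),(0,1),(0,2)], ?_, ⟨?_, ?_⟩, ?_⟩
    · refine ⟨fun p _ => lt_irrefl _, fun p _ q _ u _ h1 h2 => lt_trans h1 h2, ?_⟩
      intro p hp q hq hne
      rw [rpPairsP] at hp hq
      rcases hp with rfl | rfl | rfl | rfl | rfl | rfl <;>
        rcases hq with rfl | rfl | rfl | rfl | rfl | rfl <;>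
        first
          | exact absurd rfl hne
          | decide
    · intro p
      rw [rpPairsP]
      simp only [List.mem_cons, List.not_mem_nil, or_false]
      tauto
    · have hOI : ∀ u v u' v' : ℕ, marginP PP u v < marginP PP u' v' →
          higherPri PP (fun p q => idxP p < idxP q) (u',v') (u,v) := fun _ _ _ _ h => Or.inl h
      have hTie : ∀ u v u' v' : ℕ, marginP PP u' v' = marginP PP u v →
          idxP (u',v') < idxP (u,v) →
          higherPri PP (fun p q => idxP p < idxP q) (u',v') (u,v) :=
        fun _ _ _ _ h ht => Or.inr ⟨h, ht⟩
      refine List.Pairwise.cons ?_ (List.Pairwise.cons ?_ (List.Pairwise.cons ?_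
        (List.Pairwise.cons ?_ (List.Pairwise.cons ?_ (List.Pairwise.cons
          (fun p hp => absurd hp List.not_mem_nil) List.Pairwise.nil)))))
      · intro p hp
        simp only [List.mem_cons, List.not_mem_nil, or_false] at hp
        rcases hp with rfl | rfl | rfl | rfl | rfl
        · exact hOI 1 3 2 3 (by rw [mgP13, mgP23]; decide)
        · exact hOI 1 2 2 3 (by rw [mgP12, mgP23]; decide)
        · exact hOI 3 0 2 3 (by rw [mgP30, mgP23]; decide)
        · exact hOI 0 1 2 3 (by rw [mgP01, mgP23]; decide)
        · exact hOI 0 2 2 3 (by rw [mgP02, mgP23]; decide)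
      · intro p hp
        simp only [List.mem_cons, List.not_mem_nil, or_false] at hp
        rcases hp with rfl | rfl | rfl | rfl
        · exact hOI 1 2 1 3 (by rw [mgP12, mgP13]; decide)
        · exact hOI 3 0 1 3 (by rw [mgP30, mgP13]; decide)
        · exact hOI 0 1 1 3 (by rw [mgP01, mgP13]; decide)
        · exact hOI 0 2 1 3 (by rw [mgP02, mgP13]; decide)
      · intro p hp
        simp only [List.mem_cons, List.not_mem_nil, or_false] at hp
        rcases hp with rfl | rfl | rfl
        · exact hOI 3 0 1 2 (by rw [mgP30, mgP12]; decide)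
        · exact hOI 0 1 1 2 (by rw [mgP01, mgP12]; decide)
        · exact hOI 0 2 1 2 (by rw [mgP02, mgP12]; decide)
      · intro p hp
        simp only [List.mem_cons, List.not_mem_nil, or_false] at hp
        rcases hp with rfl | rfl
        · exact hTie 0 1 3 0 (by rw [mgP30, mgP01]) (by decide)
        · exact hTie 0 2 3 0 (by rw [mgP30, mgP02]) (by decide)
      · intro p hp
        simp only [List.mem_cons, List.not_mem_nil, or_false] at hp
        rcases hp with rfl
        exact hTie 0 2 0 1 (by rw [mgP01, mgP02]) (by decide)
    · intro y hy hne
      rw [rpRank_P]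
      have hy' : y ∈ ({0,1,2,3} : Finset ℕ) := hy
      simp only [Finset.mem_insert, Finset.mem_singleton] at hy'
      rcases hy' with rfl | rfl | rfl | rfl
      · simp
      · exact absurd rfl hne
      · simp
      · simp
  · -- AddVoter
    refine ⟨rfl, by decide, rfl, fun i _ a b => Iff.rfl, by decide, ?_⟩
    intro y hy hne
    have hy' : y ∈ ({0,1,2,3} : Finset ℕ) := hy
    simp only [Finset.mem_insert, Finset.mem_singleton] at hy'
    rcases hy' with rfl | rfl | rfl | rfl
    · decide
    · exact absurd rfl hne
    · decide
    · decide
  · -- 1 ∉ RP PP'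
    intro hx
    unfold RP at hx
    rw [Finset.mem_filter] at hx
    obtain ⟨-, T, l, hT, ⟨hmem, hpw⟩, hwin⟩ := hx
    have key : ∀ u v u' v' : ℕ, marginP PP' u v < marginP PP' u' v' →
        ¬ higherPri PP' T (u,v) (u',v') := by
      intro u v u' v' hlt h
      have h' : marginP PP' u' v' < marginP PP' u v ∨
          (marginP PP' u v = marginP PP' u' v' ∧ T (u,v) (u',v')) := h
      rcases h' with h' | ⟨h', -⟩
      · exact absurd hlt (lt_asymm h')
      · exact absurd h' (ne_of_lt hlt)
    have hirrT : ∀ p ∈ rpPairs PP', ¬ higherPri PP' T p p := by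
      intro p hp h
      have h' : marginP PP' p.1 p.2 < marginP PP' p.1 p.2 ∨
          (marginP PP' p.1 p.2 = marginP PP' p.1 p.2 ∧ T p p) := h
      rcases h' with h' | ⟨-, h'⟩
      · exact lt_irrefl _ h'
      · exact hT.1 p hp h'
    have mem23 : ((2:ℕ),(3:ℕ)) ∈ rpPairs PP' := (rpPairsQ _).2 (Or.inl rfl)
    have mem13 : ((1:ℕ),(3:ℕ)) ∈ rpPairs PP' := (rpPairsQ _).2 (Or.inr (Or.inl rfl))
    have mem12 : ((1:ℕ),(2:ℕ)) ∈ rpPairs PP' := (rpPairsQ _).2 (Or.inr (Or.inr (Or.inl rfl)))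
    have mem02 : ((0:ℕ),(2:ℕ)) ∈ rpPairs PP' :=
      (rpPairsQ _).2 (Or.inr (Or.inr (Or.inr (Or.inl rfl))))
    have mem01 : ((0:ℕ),(1:ℕ)) ∈ rpPairs PP' :=
      (rpPairsQ _).2 (Or.inr (Or.inr (Or.inr (Or.inr (Or.inl rfl)))))
    have mem30 : ((3:ℕ),(0:ℕ)) ∈ rpPairs PP' :=
      (rpPairsQ _).2 (Or.inr (Or.inr (Or.inr (Or.inr (Or.inr rfl)))))
    obtain ⟨l1, rfl, hmem1, hpw1⟩ := extract_head ((2:ℕ),(3:ℕ)) hmem hpw mem23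
      (hirrT _ mem23) (by
        intro q hq hne
        rw [rpPairsQ] at hq
        rcases hq with rfl | rfl | rfl | rfl | rfl | rfl
        · exact absurd rfl hne
        · exact key 1 3 2 3 (by rw [mgQ13, mgQ23]; decide)
        · exact key 1 2 2 3 (by rw [mgQ12, mgQ23]; decide)
        · exact key 0 2 2 3 (by rw [mgQ02, mgQ23]; decide)
        · exact key 0 1 2 3 (by rw [mgQ01, mgQ23]; decide)
        · exact key 3 0 2 3 (by rw [mgQ30, mgQ23]; decide))
    obtain ⟨l2, rfl, hmem2, hpw2⟩ := extract_head ((1:ℕ),(3:ℕ)) hmem1 hpw1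
      ⟨mem13, by decide⟩ (hirrT _ mem13) (by
        rintro q ⟨hq, hq1⟩ hne
        rw [rpPairsQ] at hq
        rcases hq with rfl | rfl | rfl | rfl | rfl | rfl
        · exact absurd rfl hq1
        · exact absurd rfl hne
        · exact key 1 2 1 3 (by rw [mgQ12, mgQ13]; decide)
        · exact key 0 2 1 3 (by rw [mgQ02, mgQ13]; decide)
        · exact key 0 1 1 3 (by rw [mgQ01, mgQ13]; decide)
        · exact key 3 0 1 3 (by rw [mgQ30, mgQ13]; decide))
    obtain ⟨l3, rfl, hmem3, hpw3⟩ := extract_head ((1:ℕ),(2:ℕ)) hmem2 hpw2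
      ⟨⟨mem12, by decide⟩, by decide⟩ (hirrT _ mem12) (by
        rintro q ⟨⟨hq, hq1⟩, hq2⟩ hne
        rw [rpPairsQ] at hq
        rcases hq with rfl | rfl | rfl | rfl | rfl | rfl
        · exact absurd rfl hq1
        · exact absurd rfl hq2
        · exact absurd rfl hne
        · exact key 0 2 1 2 (by rw [mgQ02, mgQ12]; decide)
        · exact key 0 1 1 2 (by rw [mgQ01, mgQ12]; decide)
        · exact key 3 0 1 2 (by rw [mgQ30, mgQ12]; decide))
    obtain ⟨l4, rfl, hmem4, hpw4⟩ := extract_head ((0:ℕ),(2:ℕ)) hmem3 hpw3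
      ⟨⟨⟨mem02, by decide⟩, by decide⟩, by decide⟩ (hirrT _ mem02) (by
        rintro q ⟨⟨⟨hq, hq1⟩, hq2⟩, hq3⟩ hne
        rw [rpPairsQ] at hq
        rcases hq with rfl | rfl | rfl | rfl | rfl | rfl
        · exact absurd rfl hq1
        · exact absurd rfl hq2
        · exact absurd rfl hq3
        · exact absurd rfl hne
        · exact key 0 1 0 2 (by rw [mgQ01, mgQ02]; decide)
        · exact key 3 0 0 2 (by rw [mgQ30, mgQ02]; decide))
    have hmem4' : ∀ p, p ∈ l4 ↔ (p = ((0:ℕ),(1:ℕ)) ∨ p = ((3:ℕ),(0:ℕ))) := by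
      intro p
      rw [hmem4]
      constructor
      · rintro ⟨⟨⟨⟨hS, h1⟩, h2⟩, h3⟩, h4⟩
        rw [rpPairsQ] at hS
        rcases hS with rfl | rfl | rfl | rfl | rfl | rfl
        · exact absurd rfl h1
        · exact absurd rfl h2
        · exact absurd rfl h3
        · exact absurd rfl h4
        · exact Or.inl rfl
        · exact Or.inr rfl
      · rintro (rfl | rfl)
        · exact ⟨⟨⟨⟨mem01, by decide⟩, by decide⟩, by decide⟩, by decide⟩
        · exact ⟨⟨⟨⟨mem30, by decide⟩, by decide⟩, by decide⟩, by decide⟩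
    rcases two_elem (by decide) hmem4' hpw4 (hirrT _ mem01) (hirrT _ mem30) with rfl | rfl
    · have h10 := hwin 0 (by decide) (by decide)
      rw [rpRank_A] at h10
      simp at h10
    · have h10 := hwin 0 (by decide) (by decide)
      rw [rpRank_B] at h10
      simp at h10
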